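/- If some realization T of row and column sums (x,y) is (k,l)-decomposed, then every realization of (x,y) is (k,l)-decomposed. -/
import Mathlib


open Finset

private lemma split_sum (f : ℕ → ℕ) {l p : ℕ} (h : l ≤ p) :
    ∑ j ∈ Icc 1 p, f j = ∑ j ∈ Icc 1 l, f j + ∑ j ∈ Icc (l+1) p, f j := by
  have h1 : Icc 1 p = Ioc 0 p := Finset.Icc_add_one_left_eq_Ioc 0 p
  have h2 : Icc 1 l = Ioc 0 l := Finset.Icc_add_one_left_eq_Ioc 0 l
  have h3 : Icc (l+1) p = Ioc l p := Finset.Icc_add_one_left_eq_Ioc l p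
  rw [h1, h2, h3]
  exact (Finset.sum_Ioc_consecutive f (Nat.zero_le l) h).symm

/-- If some realization T of row and column sums (x,y) is
(k,l)-decomposed, then every realization T' of (x,y) is (k,l)-decomposed. -/
theorem stmt_9 (p : ℕ) (T T' : ℕ → ℕ → ℕ) (x y : ℕ → ℕ)
    (h01 : ∀ i ∈ Finset.Icc 1 p, ∀ j ∈ Finset.Icc 1 p, T i j ≤ 1)
    (hrow : ∀ i ∈ Finset.Icc 1 p, ∑ j ∈ Finset.Icc 1 p, T i j = x i)
    (hcol : ∀ j ∈ Finset.Icc 1 p, ∑ i ∈ Finset.Icc 1 p, T i j = y j)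
    (h01' : ∀ i ∈ Finset.Icc 1 p, ∀ j ∈ Finset.Icc 1 p, T' i j ≤ 1)
    (hrow' : ∀ i ∈ Finset.Icc 1 p, ∑ j ∈ Finset.Icc 1 p, T' i j = x i)
    (hcol' : ∀ j ∈ Finset.Icc 1 p, ∑ i ∈ Finset.Icc 1 p, T' i j = y j)
    (k l : ℕ) (hk : k ≤ p) (hl : l ≤ p)
    (hdec : (∀ i ∈ Finset.Icc 1 k, ∀ j ∈ Finset.Icc 1 l, T i j = 0) ∧
      (∀ i ∈ Finset.Icc (k+1) p, ∀ j ∈ Finset.Icc (l+1) p, T i j = 1)) :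
    (∀ i ∈ Finset.Icc 1 k, ∀ j ∈ Finset.Icc 1 l, T' i j = 0) ∧
      (∀ i ∈ Finset.Icc (k+1) p, ∀ j ∈ Finset.Icc (l+1) p, T' i j = 1) := by
  classical
  obtain ⟨hTL, hBR⟩ := hdec
  have memk : ∀ i ∈ Icc 1 k, i ∈ Icc 1 p := by
    intro i hi; simp only [mem_Icc] at *; omega
  have memk' : ∀ i ∈ Icc (k+1) p, i ∈ Icc 1 p := by
    intro i hi; simp only [mem_Icc] at *; omega
  have meml' : ∀ j ∈ Icc (l+1) p, j ∈ Icc 1 p := by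
    intro j hj; simp only [mem_Icc] at *; omega
  set B := ∑ i ∈ Icc 1 k, ∑ j ∈ Icc (l+1) p, T i j with hB
  set A' := ∑ i ∈ Icc 1 k, ∑ j ∈ Icc 1 l, T' i j with hA'
  set B' := ∑ i ∈ Icc 1 k, ∑ j ∈ Icc (l+1) p, T' i j with hBd
  set D' := ∑ i ∈ Icc (k+1) p, ∑ j ∈ Icc (l+1) p, T' i j with hDd
  set N := ∑ i ∈ Icc (k+1) p, ∑ j ∈ Icc (l+1) p, (1:ℕ) with hN
  have hx1 : ∑ i ∈ Icc 1 k, x i = B := by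
    rw [hB]
    refine Finset.sum_congr rfl fun i hi => ?_
    rw [← hrow i (memk i hi), split_sum _ hl]
    have h0 : ∑ j ∈ Icc 1 l, T i j = 0 :=
      Finset.sum_eq_zero fun j hj => hTL i hi j hj
    omega
  have hx2 : ∑ i ∈ Icc 1 k, x i = A' + B' := by
    rw [hA', hBd, ← Finset.sum_add_distrib]
    refine Finset.sum_congr rfl fun i hi => ?_
    rw [← hrow' i (memk i hi), split_sum _ hl]
  have hy1 : ∑ j ∈ Icc (l+1) p, y j = B + N := by
    have hstep : ∀ j ∈ Icc (l+1) p,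
        y j = ∑ i ∈ Icc 1 k, T i j + ∑ i ∈ Icc (k+1) p, T i j := by
      intro j hj
      rw [← hcol j (meml' j hj), split_sum _ hk]
    rw [Finset.sum_congr rfl hstep, Finset.sum_add_distrib]
    congr 1
    · exact Finset.sum_comm
    · rw [hN]
      rw [Finset.sum_comm]
      refine Finset.sum_congr rfl fun i hi => Finset.sum_congr rfl fun j hj => hBR i hi j hj
  have hy2 : ∑ j ∈ Icc (l+1) p, y j = B' + D' := by
    have hstep : ∀ j ∈ Icc (l+1) p,
        y j = ∑ i ∈ Icc 1 k, T' i j + ∑ i ∈ Icc (k+1) p, T' i j := by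
      intro j hj
      rw [← hcol' j (meml' j hj), split_sum _ hk]
    rw [Finset.sum_congr rfl hstep, Finset.sum_add_distrib]
    congr 1
    · exact Finset.sum_comm
    · exact Finset.sum_comm
  have hDle : D' ≤ N :=
    Finset.sum_le_sum fun i hi => Finset.sum_le_sum fun j hj =>
      h01' i (memk' i hi) j (meml' j hj)
  have hA0 : A' = 0 := by omega
  have hDN : D' = N := by omega
  constructor
  · intro i hi j hj
    have h1 := (Finset.sum_eq_zero_iff.mp hA0) i hi
    exact (Finset.sum_eq_zero_iff.mp h1) j hj
  · intro i hi j hj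
    have hle : ∀ i ∈ Icc (k+1) p, ∑ j ∈ Icc (l+1) p, T' i j ≤ ∑ j ∈ Icc (l+1) p, (1:ℕ) :=
      fun i hi => Finset.sum_le_sum fun j hj => h01' i (memk' i hi) j (meml' j hj)
    have h1 := (Finset.sum_eq_sum_iff_of_le hle).mp hDN i hi
    have hle2 : ∀ j ∈ Icc (l+1) p, T' i j ≤ 1 :=
      fun j hj => h01' i (memk' i hi) j (meml' j hj)
    exact (Finset.sum_eq_sum_iff_of_le hle2).mp h1 j hj
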